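/- For |q| < 1 and complex a with a^2 q^k ≠ 1 for all k ≥ 0, one has ∑_{n≥0} (-1)^n a^n q^{binom(n,2)} (a;q)_n / ((a^2;q)_n (q;q)_n) = (a;q)_∞ / (a^2;q)_∞. -/

import Mathlib

open Finset Filter

noncomputable def qPoch (a q : ℂ) (n : ℕ) : ℂ := ∏ k ∈ Finset.range n, (1 - a * q ^ k)

noncomputable def qPochInf (a q : ℂ) : ℂ := ∏' k : ℕ, (1 - a * q ^ k)

noncomputable def qT (q a : ℂ) (n : ℕ) : ℂ :=
  (-1 : ℂ) ^ n * a ^ n * q ^ n.choose 2 * qPoch a q n / (qPoch (a ^ 2) q n * qPoch q q n)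

lemma qPoch_succ (a q : ℂ) (n : ℕ) :
    qPoch a q (n + 1) = qPoch a q n * (1 - a * q ^ n) := Finset.prod_range_succ _ _

lemma qPoch_add (a q : ℂ) (m n : ℕ) :
    qPoch a q (m + n) = qPoch a q m * qPoch (a * q ^ m) q n := by
  rw [qPoch, Finset.prod_range_add]
  congr 1
  refine Finset.prod_congr rfl fun k _ => ?_
  rw [pow_add]; ring

lemma choose_two_succ (n : ℕ) : (n + 1).choose 2 = n.choose 2 + n := by
  rw [Nat.choose_succ_succ]
  simp [Nat.choose_one_right]; ring

section Basic

variable {q : ℂ} (hq : ‖q‖ < 1)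

include hq

lemma q_factor_ne (k : ℕ) : (1 : ℂ) - q * q ^ k ≠ 0 := by
  intro h
  have h1 : q * q ^ k = 1 := by linear_combination -h
  have : ‖q * q ^ k‖ < 1 := by
    rw [norm_mul, norm_pow]
    calc ‖q‖ * ‖q‖ ^ k ≤ ‖q‖ * 1 := by
          apply mul_le_mul_of_nonneg_left _ (norm_nonneg q)
          exact pow_le_one₀ (norm_nonneg q) hq.le
      _ < 1 := by simpa using hq
  rw [h1] at this; simp at this

lemma qPoch_q_ne_zero (n : ℕ) : qPoch q q n ≠ 0 := by
  rw [qPoch]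
  exact Finset.prod_ne_zero_iff.mpr fun k _ => q_factor_ne hq k

lemma log_summable (c : ℂ) : Summable fun k : ℕ => Complex.log (1 - c * q ^ k) := by
  have hqn : Tendsto (fun k : ℕ => ‖c‖ * ‖q‖ ^ k) atTop (nhds 0) := by
    have : Tendsto (fun k : ℕ => (q : ℂ) ^ k) atTop (nhds 0) :=
      tendsto_pow_atTop_nhds_zero_of_norm_lt_one (by exact hq)
    simpa [norm_pow] using (this.norm.const_mul ‖c‖)
  have hev : ∀ᶠ k : ℕ in atTop, ‖Complex.log (1 - c * q ^ k)‖ ≤ (3/2) * (‖c‖ * ‖q‖ ^ k) := by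
    filter_upwards [hqn.eventually (eventually_le_nhds (by norm_num : (0:ℝ) < 1/2))] with k hk
    have h1 : ‖-(c * q ^ k)‖ ≤ 1/2 := by
      rw [norm_neg, norm_mul, norm_pow]; exact hk
    have := Complex.norm_log_one_add_half_le_self h1
    rw [show (1 : ℂ) + -(c * q ^ k) = 1 - c * q ^ k by ring] at this
    calc ‖Complex.log (1 - c * q ^ k)‖ ≤ 3/2 * ‖-(c * q ^ k)‖ := this
      _ ≤ 3/2 * (‖c‖ * ‖q‖ ^ k) := by rw [norm_neg, norm_mul, norm_pow]
  refine Summable.of_norm_bounded_eventually_nat (g := fun k => 3/2 * (‖c‖ * ‖q‖ ^ k)) ?_ hev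
  exact ((summable_geometric_of_lt_one (norm_nonneg q)
    (by exact hq)).mul_left ‖c‖).mul_left (3/2)

lemma hasProd_qPoch (c : ℂ) : HasProd (fun k : ℕ => 1 - c * q ^ k) (qPochInf c q) := by
  by_cases hz : ∀ k : ℕ, 1 - c * q ^ k ≠ 0
  · exact (Complex.multipliable_of_summable_log (log_summable hq c)).hasProd
  · push_neg at hz
    obtain ⟨K, hK⟩ := hz
    have h0 : HasProd (fun k : ℕ => 1 - c * q ^ k) 0 := by
      rw [HasProd]
      refine Tendsto.congr' ?_ tendsto_const_nhds
      filter_upwards [eventually_ge_atTop ({K} : Finset ℕ)] with s hs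
      exact (Finset.prod_eq_zero (hs (Finset.mem_singleton_self K)) hK).symm
    rwa [qPochInf, h0.tprod_eq]

lemma tendsto_qPoch (c : ℂ) :
    Tendsto (fun n => qPoch c q n) atTop (nhds (qPochInf c q)) :=
  (hasProd_qPoch hq c).tendsto_prod_nat

lemma qPochInf_ne_zero (c : ℂ) (hc : ∀ k : ℕ, (1 : ℂ) - c * q ^ k ≠ 0) :
    qPochInf c q ≠ 0 := by
  have := Complex.cexp_tsum_eq_tprod (f := fun k => 1 - c * q ^ k) (fun k => hc k)
    (log_summable hq c)
  rw [qPochInf, ← this]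
  exact Complex.exp_ne_zero _

lemma qPoch_norm_le (c : ℂ) (n : ℕ) :
    ‖qPoch c q n‖ ≤ Real.exp (‖c‖ / (1 - ‖q‖)) := by
  have hq' : ‖q‖ < 1 := by exact hq
  rw [qPoch]
  calc ‖∏ k ∈ range n, (1 - c * q ^ k)‖ = ∏ k ∈ range n, ‖1 - c * q ^ k‖ := norm_prod _ _
    _ ≤ ∏ k ∈ range n, Real.exp (‖c‖ * ‖q‖ ^ k) := by
        apply Finset.prod_le_prod (fun k _ => norm_nonneg _)
        intro k _
        calc ‖1 - c * q ^ k‖ ≤ ‖(1 : ℂ)‖ + ‖c * q ^ k‖ := norm_sub_le _ _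
          _ = ‖c‖ * ‖q‖ ^ k + 1 := by rw [norm_mul, norm_pow, norm_one]; ring
          _ ≤ Real.exp (‖c‖ * ‖q‖ ^ k) := Real.add_one_le_exp _
    _ = Real.exp (∑ k ∈ range n, ‖c‖ * ‖q‖ ^ k) := (Real.exp_sum _ _).symm
    _ ≤ Real.exp (‖c‖ / (1 - ‖q‖)) := by
        apply Real.exp_le_exp.mpr
        rw [← Finset.mul_sum, div_eq_mul_inv]
        apply mul_le_mul_of_nonneg_left _ (norm_nonneg c)
        calc ∑ k ∈ range n, ‖q‖ ^ k ≤ ∑' k : ℕ, ‖q‖ ^ k :=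
              (summable_geometric_of_lt_one (norm_nonneg q) hq').sum_le_tsum _
                (fun k _ => by positivity)
          _ = (1 - ‖q‖)⁻¹ := tsum_geometric_of_lt_one (norm_nonneg q) hq'

end Basic

lemma exists_pos_le_of_tendsto {u : ℕ → ℝ} {L : ℝ} (hu : Filter.Tendsto u Filter.atTop (nhds L))
    (hL : 0 < L) (h : ∀ n, 0 < u n) : ∃ δ > 0, ∀ n, δ ≤ u n := by
  have hev := hu.eventually (eventually_gt_nhds (half_lt_self hL))
  rw [eventually_atTop] at hev
  obtain ⟨N, hN⟩ := hev
  refine ⟨min (L/2) ((range (N+1)).inf' nonempty_range_add_one u), lt_min (by linarith) ?_, fun n => ?_⟩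
  · rw [Finset.lt_inf'_iff]
    exact fun i _ => h i
  · rcases le_or_gt n N with hn | hn
    · exact le_trans (min_le_right _ _)
        (Finset.inf'_le u (by simp [Finset.mem_range]; omega))
    · exact le_trans (min_le_left _ _) (hN n hn.le).le

lemma qPoch_lower {q c : ℂ} (hq : ‖q‖ < 1) (hc : ∀ k : ℕ, (1 : ℂ) - c * q ^ k ≠ 0) :
    ∃ δ > 0, ∀ n, δ ≤ ‖qPoch c q n‖ := by
  apply exists_pos_le_of_tendsto (tendsto_qPoch hq c).norm
  · exact norm_pos_iff.mpr (qPochInf_ne_zero hq c hc)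
  · intro n
    rw [qPoch, norm_prod]
    exact Finset.prod_pos fun k _ => norm_pos_iff.mpr (hc k)

lemma qPoch_sq_ne_zero {q b : ℂ} (hb : ∀ k : ℕ, b ^ 2 * q ^ k ≠ 1) (n : ℕ) :
    qPoch (b ^ 2) q n ≠ 0 := by
  rw [qPoch]
  refine Finset.prod_ne_zero_iff.mpr fun k _ => ?_
  exact sub_ne_zero.mpr (Ne.symm (hb k))

section Summand

variable {q b : ℂ} (hq : ‖q‖ < 1) (hb : ∀ k : ℕ, b ^ 2 * q ^ k ≠ 1)

include hq hb

/-- Recurrence for the summand. -/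
lemma qT_succ (n : ℕ) :
    qT q b (n + 1) = qT q b n *
      (-(b * q ^ n) * (1 - b * q ^ n) / ((1 - b ^ 2 * q ^ n) * (1 - q * q ^ n))) := by
  have h1 : (1 : ℂ) - b ^ 2 * q ^ n ≠ 0 := sub_ne_zero.mpr (Ne.symm (hb n))
  have h2 : (1 : ℂ) - q * q ^ n ≠ 0 := q_factor_ne hq n
  have h3 := qPoch_sq_ne_zero hb n
  have h4 := qPoch_q_ne_zero hq n
  rw [qT, qT, qPoch_succ, qPoch_succ, qPoch_succ, choose_two_succ, pow_add]
  field_simp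
  ring

omit hb in
lemma ratio_tendsto0 : Filter.Tendsto
    (fun n : ℕ => -(b * q ^ n) * (1 - b * q ^ n) / ((1 - b ^ 2 * q ^ n) * (1 - q * q ^ n)))
      atTop (nhds 0) := by
  have hqn : Tendsto (fun n : ℕ => (q : ℂ) ^ n) atTop (nhds 0) :=
    tendsto_pow_atTop_nhds_zero_of_norm_lt_one (by exact hq)
  have hnum : Tendsto (fun n : ℕ => -(b * q ^ n) * (1 - b * q ^ n)) atTop (nhds 0) := by
    have := ((hqn.const_mul b).neg).mul ((hqn.const_mul b).const_sub 1)
    simpa using this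
  have hden : Tendsto (fun n : ℕ => (1 - b ^ 2 * q ^ n) * (1 - q * q ^ n)) atTop (nhds 1) := by
    have := ((hqn.const_mul (b ^ 2)).const_sub 1).mul ((hqn.const_mul q).const_sub 1)
    simpa using this
  have := hnum.div hden one_ne_zero
  simpa [Pi.div_def] using this

lemma qT_norm_summable : Summable (fun n => ‖qT q b n‖) := by
  apply summable_of_ratio_norm_eventually_le (r := 1/2) (by norm_num)
  have h := (NormedAddCommGroup.tendsto_nhds_zero.mp (ratio_tendsto0 (b := b) hq))
    (1/2) (by norm_num)
  filter_upwards [h] with n hn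
  rw [Real.norm_eq_abs, Real.norm_eq_abs, abs_norm, abs_norm, qT_succ hq hb n, norm_mul]
  exact mul_le_mul_of_nonneg_left hn.le (norm_nonneg _) |>.trans_eq (mul_comm _ _)

lemma qT_summable : Summable (qT q b) := (qT_norm_summable hq hb).of_norm

end Summand

noncomputable def qV (q b : ℂ) (n : ℕ) : ℂ :=
  qT q b n * (q ^ n * (1 - b * q ^ n) / ((1 - b ^ 2 * q ^ n) * (1 - b ^ 2 * q ^ (n + 1))))

noncomputable def qW (q b : ℂ) (n : ℕ) : ℂ :=
  qT q b n * ((1 - q ^ n) * (1 - (b + b ^ 2) * q ^ n) / (1 - b ^ 2 * q ^ n))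

section Telescope

variable {q b : ℂ} (hq : ‖q‖ < 1) (hb : ∀ k : ℕ, b ^ 2 * q ^ k ≠ 1)

include hq hb

omit hq in
lemma sq_factor_ne (k : ℕ) : (1 : ℂ) - b ^ 2 * q ^ k ≠ 0 := sub_ne_zero.mpr (Ne.symm (hb k))

omit hq hb in
lemma telescope_alg (t x : ℂ) (h1 : 1 - b ^ 2 * x ≠ 0) (h2 : 1 - b ^ 2 * (q * x) ≠ 0)
    (h3 : 1 - q * x ≠ 0) :
    t - t * (x * (1 - b * x) / ((1 - b ^ 2 * x) * (1 - b ^ 2 * (q * x)))) =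
    t * ((1 - x) * (1 - (b + b ^ 2) * x) / (1 - b ^ 2 * x)) -
      (t * (-(b * x) * (1 - b * x) / ((1 - b ^ 2 * x) * (1 - q * x)))) *
        ((1 - q * x) * (1 - (b + b ^ 2) * (q * x)) / (1 - b ^ 2 * (q * x))) := by
  have h1' : 1 - x * b ^ 2 ≠ 0 := by rwa [mul_comm x]
  have h2' : 1 - x * b ^ 2 * q ≠ 0 := by rwa [show x * b ^ 2 * q = b ^ 2 * (q * x) by ring]
  have h3' : 1 - x * q ≠ 0 := by rwa [mul_comm x]
  field_simp
  ring

lemma telescope (n : ℕ) : qT q b n - qV q b n = qW q b n - qW q b (n + 1) := by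
  have h1 := sq_factor_ne (q:=q) hb n
  have h2 : (1 : ℂ) - b ^ 2 * (q * q ^ n) ≠ 0 := by
    rw [← pow_succ']; exact sq_factor_ne (q:=q) hb (n + 1)
  have h3 := q_factor_ne hq n
  rw [qV, qW, qW, qT_succ hq hb n, pow_succ' q n]
  exact telescope_alg (qT q b n) (q ^ n) h1 h2 h3

lemma qW_tendsto : Tendsto (qW q b) atTop (nhds 0) := by
  have hqn : Tendsto (fun n : ℕ => (q : ℂ) ^ n) atTop (nhds 0) :=
    tendsto_pow_atTop_nhds_zero_of_norm_lt_one (by exact hq)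
  have hT : Tendsto (qT q b) atTop (nhds 0) := (qT_summable hq hb).tendsto_atTop_zero
  have hr : Tendsto (fun n : ℕ =>
      ((1 - q ^ n) * (1 - (b + b ^ 2) * q ^ n) / (1 - b ^ 2 * q ^ n))) atTop (nhds 1) := by
    have := ((hqn.const_sub 1).mul ((hqn.const_mul (b + b ^ 2)).const_sub 1)).div
      ((hqn.const_mul (b ^ 2)).const_sub 1) (by simp)
    simpa [Pi.div_def] using this
  have := hT.mul hr
  rw [mul_one] at this; exact this

lemma qV_summable : Summable (qV q b) := by
  have hqn : Tendsto (fun n : ℕ => (q : ℂ) ^ n) atTop (nhds 0) :=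
    tendsto_pow_atTop_nhds_zero_of_norm_lt_one (by exact hq)
  have hr : Tendsto (fun n : ℕ =>
      (q ^ n * (1 - b * q ^ n) / ((1 - b ^ 2 * q ^ n) * (1 - b ^ 2 * q ^ (n + 1))))) atTop
      (nhds 0) := by
    have hd : Tendsto (fun n : ℕ => ((1 - b ^ 2 * q ^ n) * (1 - b ^ 2 * q ^ (n + 1)))) atTop
        (nhds 1) := by
      have h2 : Tendsto (fun n : ℕ => (q : ℂ) ^ (n + 1)) atTop (nhds 0) := by
        have := hqn.comp (tendsto_add_atTop_nat 1); simpa [Function.comp_def] using this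
      have := ((hqn.const_mul (b ^ 2)).const_sub 1).mul ((h2.const_mul (b ^ 2)).const_sub 1)
      simpa using this
    have := (hqn.mul ((hqn.const_mul b).const_sub 1)).div hd one_ne_zero
    simpa [Pi.div_def] using this
  obtain ⟨C, hC⟩ := (hr.norm.bddAbove_range).imp (fun C hC => fun n =>
    hC (Set.mem_range_self n))
  apply Summable.of_norm_bounded (g := fun n => ‖qT q b n‖ * C)
    ((qT_norm_summable hq hb).mul_right C)
  intro n
  rw [qV, norm_mul]
  exact mul_le_mul_of_nonneg_left (hC n) (norm_nonneg _)

lemma tsum_qT_eq_tsum_qV : ∑' n, qT q b n = ∑' n, qV q b n := by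
  have hsub : HasSum (fun n => qT q b n - qV q b n) 0 := by
    rw [((qT_summable hq hb).sub (qV_summable hq hb)).hasSum_iff_tendsto_nat]
    have : (fun n => ∑ i ∈ range n, (qT q b i - qV q b i)) =
        fun n => qW q b 0 - qW q b n := by
      ext n
      rw [← Finset.sum_range_sub' (qW q b) n]
      exact Finset.sum_congr rfl fun i _ => telescope hq hb i
    rw [this]
    have h0 : qW q b 0 = 0 := by simp [qW]
    rw [h0]
    simpa using (qW_tendsto hq hb).neg
  have := hsub.tsum_eq
  rw [Summable.tsum_sub (qT_summable hq hb) (qV_summable hq hb)] at this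
  exact sub_eq_zero.mp this

omit hb in
lemma qPoch_one_shift (c : ℂ) (n : ℕ) :
    qPoch c q (n + 1) = (1 - c) * qPoch (c * q) q n := by
  rw [add_comm, qPoch_add c q 1 n]
  congr 1
  · simp [qPoch, Finset.prod_range_one]
  · rw [pow_one]

lemma qV_to_next (n : ℕ) :
    (1 - b ^ 2) * (1 - b ^ 2 * q) * qV q b n = (1 - b) * qT q (b * q) n := by
  have e1 : qPoch b q n * (1 - b * q ^ n) = (1 - b) * qPoch (b * q) q n := by
    rw [← qPoch_succ, qPoch_one_shift hq]
  have e2 : qPoch (b ^ 2) q n * ((1 - b ^ 2 * q ^ n) * (1 - b ^ 2 * q ^ (n + 1))) =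
      (1 - b ^ 2) * (1 - b ^ 2 * q) * qPoch ((b * q) ^ 2) q n := by
    have : qPoch (b ^ 2) q (n + 2) = qPoch (b ^ 2) q n *
        ((1 - b ^ 2 * q ^ n) * (1 - b ^ 2 * q ^ (n + 1))) := by
      rw [qPoch_succ, qPoch_succ]; ring
    rw [← this, show n + 2 = 1 + (1 + n) by ring]
    rw [qPoch_add, qPoch_add]
    have : (b * q) ^ 2 = b ^ 2 * q ^ 1 * q ^ 1 := by ring
    rw [this]
    simp [qPoch, Finset.prod_range_one]
    ring
  have h3 := qPoch_sq_ne_zero hb n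
  have h4 := qPoch_q_ne_zero hq n
  have h5 : qPoch ((b * q) ^ 2) q n ≠ 0 := by
    rw [qPoch]
    refine Finset.prod_ne_zero_iff.mpr fun k _ => ?_
    have : (b * q) ^ 2 * q ^ k = b ^ 2 * q ^ (2 + k) := by rw [pow_add]; ring
    rw [this]
    exact sub_ne_zero.mpr (Ne.symm (hb (2 + k)))
  have h6 := sq_factor_ne (q:=q) hb n
  have h7 := sq_factor_ne (q:=q) hb (n + 1)
  rw [qV, qT, qT]
  have e3 : ((b * q) ^ n : ℂ) = b ^ n * q ^ n := mul_pow b q n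
  rw [e3]
  rw [show ((b * q) ^ 2 : ℂ) = b ^ 2 * q ^ 2 by ring] at e2 h5 ⊢
  field_simp
  linear_combination ((1 - b ^ 2) * (1 - b ^ 2 * q) * b ^ n * q ^ (n.choose 2)
      * q ^ n * qPoch (b ^ 2 * q ^ 2) q n) * e1 -
    ((1 - b) * b ^ n * q ^ n * q ^ (n.choose 2)
      * qPoch (b * q) q n) * e2

lemma func_eq :
    (1 - b ^ 2) * (1 - b ^ 2 * q) * ∑' n, qT q b n = (1 - b) * ∑' n, qT q (b * q) n := by
  rw [tsum_qT_eq_tsum_qV hq hb, ← tsum_mul_left, ← tsum_mul_left]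
  exact tsum_congr (qV_to_next hq hb)

end Telescope

section Main

variable {q a : ℂ} (hq : ‖q‖ < 1) (ha : ∀ k : ℕ, a ^ 2 * q ^ k ≠ 1)

include hq ha

omit hq in
lemma shift_hyp (N : ℕ) : ∀ k : ℕ, (a * q ^ N) ^ 2 * q ^ k ≠ 1 := by
  intro k
  have : (a * q ^ N) ^ 2 * q ^ k = a ^ 2 * q ^ (2 * N + k) := by
    rw [pow_add, pow_mul]; ring
  rw [this]; exact ha _

lemma qT_shift_bound : ∃ K > 0, ∀ N n : ℕ,
    ‖qT q (a * q ^ N) n‖ ≤ K * (‖a‖ * ‖q‖ ^ N) ^ n := by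
  have hq' : ‖q‖ < 1 := by exact hq
  obtain ⟨δ₁, hδ₁, hP1⟩ := qPoch_lower hq (c := a ^ 2)
    (fun k => sub_ne_zero.mpr (Ne.symm (ha k)))
  obtain ⟨δ₂, hδ₂, hP2⟩ := qPoch_lower hq (c := q) (fun k => q_factor_ne hq k)
  set E := Real.exp (‖a‖ / (1 - ‖q‖)) with hE
  set D := Real.exp (‖a ^ 2‖ / (1 - ‖q‖)) with hD
  have hDpos : 0 < D := Real.exp_pos _
  have hEpos : 0 < E := Real.exp_pos _
  refine ⟨E * D / (δ₁ * δ₂), by positivity, fun N n => ?_⟩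
  set b := a * q ^ N with hb
  have hsq : (b ^ 2 : ℂ) = a ^ 2 * q ^ (2 * N) := by rw [hb, mul_pow, ← pow_mul, mul_comm N 2]
  have hden1 : δ₁ / D ≤ ‖qPoch (b ^ 2) q n‖ := by
    have key : qPoch (a ^ 2) q (2 * N + n) = qPoch (a ^ 2) q (2 * N) * qPoch (b ^ 2) q n := by
      rw [qPoch_add, hsq]
    have h2N : ‖qPoch (a ^ 2) q (2 * N)‖ ≤ D := qPoch_norm_le hq _ _
    have h2Npos : (0:ℝ) < ‖qPoch (a ^ 2) q (2 * N)‖ := lt_of_lt_of_le hδ₁ (hP1 _)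
    rw [div_le_iff₀ hDpos]
    calc δ₁ ≤ ‖qPoch (a ^ 2) q (2 * N + n)‖ := hP1 _
      _ = ‖qPoch (b ^ 2) q n‖ * ‖qPoch (a ^ 2) q (2 * N)‖ := by rw [key, norm_mul]; ring
      _ ≤ ‖qPoch (b ^ 2) q n‖ * D := by
          apply mul_le_mul_of_nonneg_left h2N (norm_nonneg _)
  have hnum : ‖(-1 : ℂ) ^ n * b ^ n * q ^ n.choose 2 * qPoch b q n‖ ≤
      (‖a‖ * ‖q‖ ^ N) ^ n * E := by
    rw [norm_mul, norm_mul, norm_mul, norm_pow, norm_pow, norm_pow, norm_neg, norm_one,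
      one_pow, one_mul]
    have hbnorm : ‖b‖ = ‖a‖ * ‖q‖ ^ N := by rw [hb, norm_mul, norm_pow]
    rw [hbnorm]
    have hqc : ‖q‖ ^ n.choose 2 ≤ 1 := pow_le_one₀ (norm_nonneg q) hq'.le
    have hE' : ‖qPoch b q n‖ ≤ E := by
      refine le_trans (qPoch_norm_le hq b n) (Real.exp_le_exp.mpr ?_)
      apply div_le_div_of_nonneg_right _ (by linarith)
      · rw [hbnorm]
        calc ‖a‖ * ‖q‖ ^ N ≤ ‖a‖ * 1 := by
              apply mul_le_mul_of_nonneg_left (pow_le_one₀ (norm_nonneg q) hq'.le) (norm_nonneg a)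
          _ = ‖a‖ := mul_one _
    calc (‖a‖ * ‖q‖ ^ N) ^ n * ‖q‖ ^ n.choose 2 * ‖qPoch b q n‖
        ≤ (‖a‖ * ‖q‖ ^ N) ^ n * 1 * E := by
          apply mul_le_mul (mul_le_mul_of_nonneg_left hqc (by positivity)) hE'
            (norm_nonneg _) (by positivity)
      _ = (‖a‖ * ‖q‖ ^ N) ^ n * E := by ring
  rw [qT, norm_div,
    show ‖qPoch (b ^ 2) q n * qPoch q q n‖ = ‖qPoch (b ^ 2) q n‖ * ‖qPoch q q n‖
      from norm_mul _ _]
  rw [div_le_iff₀ (by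
    exact mul_pos (lt_of_lt_of_le (by positivity) hden1) (lt_of_lt_of_le hδ₂ (hP2 n)))]
  calc ‖(-1 : ℂ) ^ n * b ^ n * q ^ n.choose 2 * qPoch b q n‖ ≤ (‖a‖ * ‖q‖ ^ N) ^ n * E :=
        hnum
    _ ≤ E * D / (δ₁ * δ₂) * (‖a‖ * ‖q‖ ^ N) ^ n * (δ₁ / D * δ₂) := by
        rw [show E * D / (δ₁ * δ₂) * (‖a‖ * ‖q‖ ^ N) ^ n * (δ₁ / D * δ₂)
          = (‖a‖ * ‖q‖ ^ N) ^ n * E by field_simp]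
    _ ≤ E * D / (δ₁ * δ₂) * (‖a‖ * ‖q‖ ^ N) ^ n * (‖qPoch (b ^ 2) q n‖ * ‖qPoch q q n‖) := by
        apply mul_le_mul_of_nonneg_left _ (by positivity)
        exact mul_le_mul hden1 (hP2 n) hδ₂.le (norm_nonneg _)

lemma tendsto_S_one :
    Tendsto (fun N => ∑' n, qT q (a * q ^ N) n) atTop (nhds 1) := by
  have hq' : ‖q‖ < 1 := by exact hq
  obtain ⟨K, hK, hbd⟩ := qT_shift_bound hq ha
  have hr : Tendsto (fun N : ℕ => ‖a‖ * ‖q‖ ^ N) atTop (nhds 0) := by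
    simpa using (tendsto_pow_atTop_nhds_zero_of_norm_lt_one
      (x := ‖q‖) (by rwa [Real.norm_eq_abs, abs_of_nonneg (norm_nonneg q)])).const_mul ‖a‖
  rw [tendsto_iff_norm_sub_tendsto_zero]
  apply squeeze_zero' (Eventually.of_forall fun N => norm_nonneg _)
    (g := fun N => 2 * K * (‖a‖ * ‖q‖ ^ N))
  · filter_upwards [hr.eventually (eventually_le_nhds (by norm_num : (0:ℝ) < 1/2))] with N hN
    set b := a * q ^ N with hb
    set r := ‖a‖ * ‖q‖ ^ N with hrr
    have hr0 : 0 ≤ r := by positivity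
    have hr1 : r < 1 := lt_of_le_of_lt hN (by norm_num)
    have hsum := qT_norm_summable hq (shift_hyp ha N)
    have hsum1 : Summable fun n => ‖qT q b (n + 1)‖ :=
      (summable_nat_add_iff (f := fun n => ‖qT q b n‖) 1).mpr hsum
    have h0 : qT q b 0 = 1 := by simp [qT, qPoch]
    rw [Summable.tsum_eq_zero_add hsum.of_norm, h0]
    rw [show (1 : ℂ) + ∑' n, qT q b (n + 1) - 1 = ∑' n, qT q b (n + 1) by ring]
    calc ‖∑' n, qT q b (n + 1)‖ ≤ ∑' n, ‖qT q b (n + 1)‖ := norm_tsum_le_tsum_norm hsum1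
      _ ≤ ∑' n : ℕ, K * r * r ^ n := by
          apply hsum1.tsum_le_tsum _ (((summable_geometric_of_lt_one hr0 hr1).mul_left _))
          intro n
          calc ‖qT q b (n + 1)‖ ≤ K * r ^ (n + 1) := hbd N (n + 1)
            _ = K * r * r ^ n := by ring
      _ = K * r * (1 - r)⁻¹ := by
          rw [tsum_mul_left, tsum_geometric_of_lt_one hr0 hr1]
      _ ≤ 2 * K * r := by
          rw [show (2:ℝ) * K * r = K * r * 2 by ring]
          apply mul_le_mul_of_nonneg_left _ (by positivity)
          rw [inv_le_comm₀ (by linarith) (by norm_num)]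
          linarith
  · simpa using hr.const_mul (2 * K)

lemma iterate_eq (N : ℕ) :
    qPoch (a ^ 2) q (2 * N) * ∑' n, qT q a n =
      qPoch a q N * ∑' n, qT q (a * q ^ N) n := by
  induction N with
  | zero => simp [qPoch]
  | succ N ih =>
    have hbN := shift_hyp ha N
    have hfe := func_eq hq hbN
    have hsq : ((a * q ^ N) ^ 2 : ℂ) = a ^ 2 * q ^ (2 * N) := by
      rw [mul_pow, ← pow_mul, mul_comm N 2]
    have hsq' : ((a * q ^ N) ^ 2 * q : ℂ) = a ^ 2 * q ^ (2 * N + 1) := by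
      rw [hsq, pow_succ]; ring
    have hbq : (a * q ^ N * q : ℂ) = a * q ^ (N + 1) := by rw [pow_succ]; ring
    rw [hsq', hsq, hbq] at hfe
    have expand : qPoch (a ^ 2) q (2 * (N + 1)) = qPoch (a ^ 2) q (2 * N) *
        (1 - a ^ 2 * q ^ (2 * N)) * (1 - a ^ 2 * q ^ (2 * N + 1)) := by
      rw [show 2 * (N + 1) = (2 * N + 1) + 1 by ring, qPoch_succ, qPoch_succ]
    rw [expand, qPoch_succ]
    have hsq2 : (1 - (a * q ^ N) ^ 2) = (1 - a ^ 2 * q ^ (2 * N)) := by rw [hsq]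
    linear_combination (1 - a ^ 2 * q ^ (2 * N)) * (1 - a ^ 2 * q ^ (2 * N + 1)) * ih +
      qPoch a q N * hfe + qPoch a q N * (∑' n, qT q (a * q ^ N) n) *
        (1 - a ^ 2 * q ^ (2 * N + 1)) * hsq2

lemma main_eq :
    ∑' n, qT q a n = qPochInf a q / qPochInf (a ^ 2) q := by
  have hne : qPochInf (a ^ 2) q ≠ 0 :=
    qPochInf_ne_zero hq (a ^ 2) (fun k => sub_ne_zero.mpr (Ne.symm (ha k)))
  have hdouble : Tendsto (fun N : ℕ => 2 * N) atTop atTop :=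
    tendsto_atTop_atTop.mpr fun b => ⟨b, fun n hn => by omega⟩
  have h1 : Tendsto (fun N : ℕ => qPoch (a ^ 2) q (2 * N) * ∑' n, qT q a n) atTop
      (nhds (qPochInf (a ^ 2) q * ∑' n, qT q a n)) :=
    (((tendsto_qPoch hq (a ^ 2)).comp hdouble)).mul_const _
  have h2 : Tendsto (fun N : ℕ => qPoch a q N * ∑' n, qT q (a * q ^ N) n) atTop
      (nhds (qPochInf a q * 1)) :=
    (tendsto_qPoch hq a).mul (tendsto_S_one hq ha)
  have key : qPochInf (a ^ 2) q * ∑' n, qT q a n = qPochInf a q * 1 :=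
    tendsto_nhds_unique (h1.congr (fun N => iterate_eq hq ha N)) h2
  rw [eq_div_iff hne]
  linear_combination key

end Main

theorem stmt9 (q a : ℂ) (hq : ‖q‖ < 1)
    (ha : ∀ k : ℕ, a ^ 2 * q ^ k ≠ 1) :
    ∑' n : ℕ, ((-1 : ℂ) ^ n * a ^ n * q ^ n.choose 2 * qPoch a q n
      / (qPoch (a ^ 2) q n * qPoch q q n))
    = qPochInf a q / qPochInf (a ^ 2) q := by
  exact main_eq hq ha
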